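/- For every integer n ≥ 2, the set of lengths of the interval {0, 1, …, n} in P_fin,0(ℕ) equals {2, 3, …, n}; equivalently, for an integer k ≥ 1, the set {0, 1, …, n} can be written as a sum of k atoms of P_fin,0(ℕ) if and only if 2 ≤ k ≤ n. -/
import Mathlib

open Pointwise

/-- `A` is an atom of the restricted power monoid `P_fin,0(ℕ)` of finite subsets of `ℕ`
containing `0`, under set addition. -/
def IsAtom0 (A : Finset ℕ) : Prop :=
  0 ∈ A ∧ A ≠ {0} ∧
    ∀ X Y : Finset ℕ, 0 ∈ X → 0 ∈ Y → A = X + Y → X = {0} ∨ Y = {0}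

namespace Stmt15Aux

open Finset

lemma mem_add' {X Y : Finset ℕ} {a : ℕ} : a ∈ X + Y ↔ ∃ x ∈ X, ∃ y ∈ Y, x + y = a :=
  Finset.mem_add

lemma subset_left {X Y : Finset ℕ} (hY : 0 ∈ Y) : X ⊆ X + Y := by
  intro x hx
  exact mem_add'.2 ⟨x, hx, 0, hY, by omega⟩

lemma subset_right {X Y : Finset ℕ} (hX : 0 ∈ X) : Y ⊆ X + Y := by
  intro y hy
  exact mem_add'.2 ⟨0, hX, y, hy, by omega⟩

lemma zero_mem_add {X Y : Finset ℕ} (hX : 0 ∈ X) (hY : 0 ∈ Y) : 0 ∈ X + Y :=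
  mem_add'.2 ⟨0, hX, 0, hY, rfl⟩

/-- sup of a sumset -/
lemma sup_add {X Y : Finset ℕ} (hX : 0 ∈ X) (hY : 0 ∈ Y) :
    (X + Y).sup id = X.sup id + Y.sup id := by
  apply le_antisymm
  · apply Finset.sup_le
    intro a ha
    obtain ⟨x, hx, y, hy, rfl⟩ := mem_add'.1 ha
    exact add_le_add (Finset.le_sup (f := id) hx) (Finset.le_sup (f := id) hy)
  · obtain ⟨x, hx, hx'⟩ := Finset.exists_mem_eq_sup X ⟨0, hX⟩ id
    obtain ⟨y, hy, hy'⟩ := Finset.exists_mem_eq_sup Y ⟨0, hY⟩ id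
    rw [hx', hy']
    exact Finset.le_sup (f := id) (mem_add'.2 ⟨x, hx, y, hy, rfl⟩)

lemma zero_mem_sum {l : List (Finset ℕ)} (h : ∀ A ∈ l, 0 ∈ A) : 0 ∈ l.sum := by
  induction l with
  | nil => simp [List.sum_nil]
  | cons a t ih =>
    rw [List.sum_cons]
    exact zero_mem_add (h a (by simp)) (ih fun A hA => h A (by simp [hA]))

lemma sup_sum {l : List (Finset ℕ)} (h : ∀ A ∈ l, 0 ∈ A) :
    (l.sum).sup id = (l.map (fun A => A.sup id)).sum := by
  induction l with
  | nil => simp [List.sum_nil]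
  | cons a t ih =>
    rw [List.sum_cons, List.map_cons, List.sum_cons,
      sup_add (h a (by simp)) (zero_mem_sum fun A hA => h A (by simp [hA])),
      ih fun A hA => h A (by simp [hA])]

lemma length_le_sum {l : List ℕ} (h : ∀ x ∈ l, 1 ≤ x) : l.length ≤ l.sum := by
  induction l with
  | nil => simp
  | cons a t ih =>
    simp only [List.length_cons, List.sum_cons]
    have := h a (by simp)
    have := ih fun x hx => h x (by simp [hx])
    omega

/-- one pair of consecutive elements: atom criterion -/
lemma atom_core_one {B : Finset ℕ} (h1 : 1 ∈ B)
    (hp : ∀ b ∈ B, b + 1 ∈ B → b = 0) :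
    ∀ X Y : Finset ℕ, 0 ∈ X → 0 ∈ Y → B = X + Y → X = {0} ∨ Y = {0} := by
  have key : ∀ X Y : Finset ℕ, 0 ∈ X → 0 ∈ Y → B = X + Y → 1 ∈ X → Y = {0} := by
    intro X Y hX hY hB h1X
    apply Finset.eq_singleton_iff_unique_mem.2 ⟨hY, ?_⟩
    intro y hy
    have hyB : y ∈ B := hB ▸ subset_right hX hy
    have hy1B : y + 1 ∈ B := hB ▸ mem_add'.2 ⟨1, h1X, y, hy, by omega⟩
    exact hp y hyB hy1B
  intro X Y hX hY hB
  obtain ⟨x, hx, y, hy, hxy⟩ := mem_add'.1 (hB ▸ h1)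
  rcases Nat.eq_zero_or_pos x with hx0 | hx0
  · subst hx0
    have : y = 1 := by omega
    subst this
    exact Or.inl (key Y X hY hX (by rw [hB, add_comm]) hy)
  · have : x = 1 := by omega
    subst this
    exact Or.inr (key X Y hX hY hB hx)

/-- two pairs of consecutive elements (0,1) and (t,t+1): atom criterion -/
lemma atom_core_two {B : Finset ℕ} {t : ℕ} (h1 : 1 ∈ B)
    (hp : ∀ b ∈ B, b + 1 ∈ B → b = 0 ∨ b = t)
    (hmax : ∀ b ∈ B, b ≤ t + 1)
    (hc : ∃ c ∈ B, c ≠ 0 ∧ c ≠ 1 ∧ c ≠ t ∧ c ≠ t + 1) :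
    ∀ X Y : Finset ℕ, 0 ∈ X → 0 ∈ Y → B = X + Y → X = {0} ∨ Y = {0} := by
  have key : ∀ X Y : Finset ℕ, 0 ∈ X → 0 ∈ Y → B = X + Y → 1 ∈ X → Y = {0} := by
    intro X Y hX hY hB h1X
    have hYsub : ∀ y ∈ Y, y = 0 ∨ y = t := by
      intro y hy
      have hyB : y ∈ B := hB ▸ subset_right hX hy
      have hy1B : y + 1 ∈ B := hB ▸ mem_add'.2 ⟨1, h1X, y, hy, by omega⟩
      exact hp y hyB hy1B
    by_cases ht : t ∈ Y
    · -- then X ⊆ {0,1} and B = {0,1,t,t+1}, contradicting hc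
      exfalso
      have hXsub : ∀ x ∈ X, x ≤ 1 := by
        intro x hx
        have : x + t ∈ B := hB ▸ mem_add'.2 ⟨x, hx, t, ht, rfl⟩
        have := hmax _ this
        omega
      obtain ⟨c, hcB, hc0, hc1, hct, hct1⟩ := hc
      obtain ⟨x, hx, y, hy, hxy⟩ := mem_add'.1 (hB ▸ hcB)
      have := hXsub x hx
      rcases hYsub y hy with h | h <;> omega
    · apply Finset.eq_singleton_iff_unique_mem.2 ⟨hY, ?_⟩
      intro y hy
      rcases hYsub y hy with h | h
      · exact h
      · exact absurd (h ▸ hy) ht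
  intro X Y hX hY hB
  obtain ⟨x, hx, y, hy, hxy⟩ := mem_add'.1 (hB ▸ h1)
  rcases Nat.eq_zero_or_pos x with hx0 | hx0
  · subst hx0
    have : y = 1 := by omega
    subst this
    exact Or.inl (key Y X hY hX (by rw [hB, add_comm]) hy)
  · have : x = 1 := by omega
    subst this
    exact Or.inr (key X Y hX hY hB hx)

/-- The even-case atom: `{0, 1, 3, 5, …}` below `m`. -/
def Em (m : ℕ) : Finset ℕ := insert 0 ((Finset.range m).filter (fun x => x % 2 = 1))

lemma mem_Em {m x : ℕ} : x ∈ Em m ↔ x = 0 ∨ (x < m ∧ x % 2 = 1) := by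
  simp [Em]

/-- The odd-case atom: `Em (m-1)` plus `m-1`. -/
def Om (m : ℕ) : Finset ℕ := insert (m - 1) (Em (m - 1))

lemma mem_Om {m x : ℕ} : x ∈ Om m ↔ x = m - 1 ∨ x = 0 ∨ (x < m - 1 ∧ x % 2 = 1) := by
  simp [Om, mem_Em]

lemma Em_atom {m : ℕ} (hm : 2 ≤ m) : IsAtom0 (Em m) := by
  refine ⟨mem_Em.2 (Or.inl rfl), ?_, ?_⟩
  · intro h
    have : (1 : ℕ) ∈ Em m := mem_Em.2 (Or.inr ⟨by omega, by omega⟩)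
    rw [h] at this
    simp at this
  · apply atom_core_one (mem_Em.2 (Or.inr ⟨by omega, by omega⟩))
    intro b hb hb1
    rcases mem_Em.1 hb with h | h
    · exact h
    · rcases mem_Em.1 hb1 with h' | h' <;> omega

lemma Om_atom {m : ℕ} (hm : 7 ≤ m) (hodd : m % 2 = 1) : IsAtom0 (Om m) := by
  refine ⟨mem_Om.2 (Or.inr (Or.inl rfl)), ?_, ?_⟩
  · intro h
    have : (1 : ℕ) ∈ Om m := mem_Om.2 (Or.inr (Or.inr ⟨by omega, by omega⟩))
    rw [h] at this
    simp at this
  · apply atom_core_two (t := m - 2) (mem_Om.2 (Or.inr (Or.inr ⟨by omega, by omega⟩)))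
    · intro b hb hb1
      rcases mem_Om.1 hb with h | h | h
      · rcases mem_Om.1 hb1 with h' | h' | h' <;> omega
      · omega
      · rcases mem_Om.1 hb1 with h' | h' | h' <;> omega
    · intro b hb
      rcases mem_Om.1 hb with h | h | h <;> omega
    · exact ⟨3, mem_Om.2 (Or.inr (Or.inr ⟨by omega, by omega⟩)), by omega, by omega, by omega, by omega⟩

lemma small3_atom : IsAtom0 ({0, 2} : Finset ℕ) := by
  refine ⟨by decide, by decide, ?_⟩
  intro X Y hX hY hB
  by_contra hcon
  push_neg at hcon
  obtain ⟨hX1, hY1⟩ := hcon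
  have hXB : X ⊆ ({0,2} : Finset ℕ) := hB ▸ subset_left hY
  have hYB : Y ⊆ ({0,2} : Finset ℕ) := hB ▸ subset_right hX
  have h2X : (2:ℕ) ∈ X := by
    by_contra h
    apply hX1
    apply Finset.eq_singleton_iff_unique_mem.2 ⟨hX, ?_⟩
    intro x hx
    have := hXB hx
    simp at this
    rcases this with h' | h' <;> first | exact h' | exact absurd (h' ▸ hx) h
  have h2Y : (2:ℕ) ∈ Y := by
    by_contra h
    apply hY1
    apply Finset.eq_singleton_iff_unique_mem.2 ⟨hY, ?_⟩
    intro y hy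
    have := hYB hy
    simp at this
    rcases this with h' | h' <;> first | exact h' | exact absurd (h' ▸ hy) h
  have : (4:ℕ) ∈ ({0,2} : Finset ℕ) := hB ▸ mem_add'.2 ⟨2, h2X, 2, h2Y, rfl⟩
  simp at this

lemma small5_atom : IsAtom0 ({0, 2, 3, 4} : Finset ℕ) := by
  refine ⟨by decide, by decide, ?_⟩
  have key : ∀ X Y : Finset ℕ, 0 ∈ X → 0 ∈ Y → ({0,2,3,4} : Finset ℕ) = X + Y → 3 ∈ X → Y = {0} := by
    intro X Y hX hY hB h3X
    apply Finset.eq_singleton_iff_unique_mem.2 ⟨hY, ?_⟩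
    intro y hy
    have hyB : y ∈ ({0,2,3,4} : Finset ℕ) := hB ▸ subset_right hX hy
    have h3y : 3 + y ∈ ({0,2,3,4} : Finset ℕ) := hB ▸ mem_add'.2 ⟨3, h3X, y, hy, rfl⟩
    simp at hyB h3y
    omega
  intro X Y hX hY hB
  have h3 : (3:ℕ) ∈ X + Y := hB ▸ (by decide : (3:ℕ) ∈ ({0,2,3,4} : Finset ℕ))
  obtain ⟨x, hx, y, hy, hxy⟩ := mem_add'.1 h3
  have hxB : x ∈ ({0,2,3,4} : Finset ℕ) := hB ▸ subset_left hY hx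
  have hyB : y ∈ ({0,2,3,4} : Finset ℕ) := hB ▸ subset_right hX hy
  simp at hxB hyB
  have : x = 3 ∨ y = 3 := by omega
  rcases this with h | h
  · exact Or.inr (key X Y hX hY hB (h ▸ hx))
  · exact Or.inl (key Y X hY hX (by rw [hB, add_comm]) (h ▸ hy))

lemma pair_atom : IsAtom0 ({0, 1} : Finset ℕ) := by
  refine ⟨by decide, by decide, ?_⟩
  apply atom_core_one (by decide)
  intro b hb hb1
  fin_cases hb <;> simp_all

lemma range_add_range {a b : ℕ} :
    Finset.range (a + 1) + Finset.range (b + 1) = Finset.range (a + b + 1) := by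
  ext z
  simp only [mem_add', Finset.mem_range]
  constructor
  · rintro ⟨x, hx, y, hy, rfl⟩; omega
  · intro hz
    exact ⟨min z a, by omega, z - min z a, by omega, by omega⟩

lemma pair_eq_range : ({0, 1} : Finset ℕ) = Finset.range 2 := by decide

lemma sum_replicate_pair (j : ℕ) :
    (List.replicate j ({0,1} : Finset ℕ)).sum = Finset.range (j + 1) := by
  induction j with
  | zero => simp [List.replicate]; rfl
  | succ j ih =>
    rw [List.replicate_succ, List.sum_cons, ih, pair_eq_range, add_comm]
    have := range_add_range (a := j) (b := 1)
    simpa using this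

lemma Em_cover {m : ℕ} (hm : 2 ≤ m) (heven : m % 2 = 0) :
    Em m + {0, 1} = Finset.range (m + 1) := by
  ext z
  simp only [mem_add', mem_Em, Finset.mem_range, Finset.mem_insert, Finset.mem_singleton]
  constructor
  · rintro ⟨x, hx, y, hy, rfl⟩; omega
  · intro hz
    rcases Nat.eq_zero_or_pos z with h0 | h0
    · exact ⟨0, Or.inl rfl, 0, Or.inl rfl, by omega⟩
    · rcases Nat.even_or_odd z with he | ho
      · have h1 : z - 1 < m ∧ (z-1) % 2 = 1 := by
          obtain ⟨c, hc⟩ := he; omega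
        exact ⟨z - 1, Or.inr h1, 1, Or.inr rfl, by omega⟩
      · have h1 : z < m ∧ z % 2 = 1 := by
          obtain ⟨c, hc⟩ := ho; omega
        exact ⟨z, Or.inr h1, 0, Or.inl rfl, by omega⟩

lemma Om_cover {m : ℕ} (hm : 3 ≤ m) (hodd : m % 2 = 1) :
    Om m + {0, 1} = Finset.range (m + 1) := by
  ext z
  simp only [mem_add', mem_Om, Finset.mem_range, Finset.mem_insert, Finset.mem_singleton]
  constructor
  · rintro ⟨x, hx, y, hy, rfl⟩; omega
  · intro hz
    rcases Nat.eq_zero_or_pos z with h0 | h0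
    · exact ⟨0, Or.inr (Or.inl rfl), 0, Or.inl rfl, by omega⟩
    · by_cases hzm : z = m
      · exact ⟨m - 1, Or.inl rfl, 1, Or.inr rfl, by omega⟩
      · by_cases hzm1 : z = m - 1
        · exact ⟨m - 1, Or.inl rfl, 0, Or.inl rfl, by omega⟩
        · rcases Nat.even_or_odd z with he | ho
          · have h1 : z - 1 < m - 1 ∧ (z-1) % 2 = 1 := by
              obtain ⟨c, hc⟩ := he; omega
            exact ⟨z - 1, Or.inr (Or.inr h1), 1, Or.inr rfl, by omega⟩
          · have h1 : z < m - 1 ∧ z % 2 = 1 := by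
              obtain ⟨c, hc⟩ := ho; omega
            exact ⟨z, Or.inr (Or.inr h1), 0, Or.inl rfl, by omega⟩

lemma sup_range (n : ℕ) : (Finset.range (n + 1)).sup id = n := by
  apply le_antisymm
  · apply Finset.sup_le; intro b hb; simp only [id_eq]; simp at hb; omega
  · exact Finset.le_sup (f := id) (by simp)

/-- base atom B with B + {0,1} = range (m+1), for every m ≥ 2 -/
lemma exists_base (m : ℕ) (hm : 2 ≤ m) :
    ∃ B : Finset ℕ, IsAtom0 B ∧ B + {0, 1} = Finset.range (m + 1) := by
  rcases Nat.even_or_odd m with he | ho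
  · have he' : m % 2 = 0 := by obtain ⟨c, hc⟩ := he; omega
    exact ⟨Em m, Em_atom hm, Em_cover hm he'⟩
  · have ho' : m % 2 = 1 := by obtain ⟨c, hc⟩ := ho; omega
    by_cases h3 : m = 3
    · subst h3
      exact ⟨{0, 2}, small3_atom, by decide⟩
    · by_cases h5 : m = 5
      · subst h5
        exact ⟨{0, 2, 3, 4}, small5_atom, by decide⟩
      · refine ⟨Om m, Om_atom (by omega) ho', Om_cover (by omega) ho'⟩

end Stmt15Aux

open Stmt15Aux Finset in
/-- For every `n ≥ 2`, the set of lengths of the interval `{0, 1, …, n}` in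
`P_fin,0(ℕ)` is `{2, …, n}`: for `k ≥ 1`, the interval is a sum of `k` atoms iff
`2 ≤ k ≤ n`. -/
theorem stmt_15 (n : ℕ) (hn : 2 ≤ n) (k : ℕ) (hk : 1 ≤ k) :
    (∃ l : List (Finset ℕ), l.length = k ∧ (∀ A ∈ l, IsAtom0 A) ∧
      l.sum = Finset.range (n + 1)) ↔ 2 ≤ k ∧ k ≤ n := by
  constructor
  · rintro ⟨l, hlen, hatoms, hsum⟩
    constructor
    · -- k ≥ 2
      by_contra h
      have hk1 : k = 1 := by omega
      subst hk1
      obtain ⟨A, rfl⟩ := List.length_eq_one_iff.1 hlen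
      have hA : A = Finset.range (n + 1) := by simpa using hsum
      obtain ⟨h0, hne, hsplit⟩ := hatoms A (by simp)
      have hdecomp : A = {0, 1} + Finset.range n := by
        rw [hA, pair_eq_range]
        have := range_add_range (a := 1) (b := n - 1)
        rw [show n - 1 + 1 = n by omega] at this
        rw [this]
        congr 1
        omega
      rcases hsplit {0,1} (Finset.range n) (by decide) (by simp; omega) hdecomp with h | h
      · have : (1:ℕ) ∈ ({0,1} : Finset ℕ) := by decide
        rw [h] at this
        simp at this
      · have : (1:ℕ) ∈ Finset.range n := by simp; omega
        rw [h] at this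
        simp at this
    · -- k ≤ n
      have h0all : ∀ A ∈ l, 0 ∈ A := fun A hA => (hatoms A hA).1
      have hsup : (l.sum).sup id = (l.map (fun A => A.sup id)).sum := sup_sum h0all
      rw [hsum, sup_range] at hsup
      have hge : ∀ x ∈ l.map (fun A => A.sup id), 1 ≤ x := by
        intro x hx
        obtain ⟨A, hA, rfl⟩ := List.mem_map.1 hx
        obtain ⟨h0, hne, -⟩ := hatoms A hA
        have : ∃ a ∈ A, a ≠ 0 := by
          by_contra hcon
          push_neg at hcon
          exact hne (Finset.eq_singleton_iff_unique_mem.2 ⟨h0, hcon⟩)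
        obtain ⟨a, ha, ha0⟩ := this
        have := Finset.le_sup (f := id) ha
        simp at this
        omega
      have := length_le_sum hge
      rw [← hsup, List.length_map, hlen] at this
      exact this
  · rintro ⟨hk2, hkn⟩
    set m := n - k + 2 with hm
    obtain ⟨B, hBatom, hBcov⟩ := exists_base m (by omega)
    refine ⟨B :: List.replicate (k - 1) ({0,1} : Finset ℕ), ?_, ?_, ?_⟩
    · simp; omega
    · intro A hA
      rcases List.mem_cons.1 hA with rfl | hA
      · exact hBatom
      · rw [List.eq_of_mem_replicate hA]
        exact pair_atom
    · have hrk : Finset.range k = ({0,1} : Finset ℕ) + Finset.range (k - 1) := by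
        rw [pair_eq_range]
        have := range_add_range (a := 1) (b := k - 2)
        rw [show 1 + (k-2) + 1 = k by omega, show k - 2 + 1 = k - 1 by omega] at this
        exact this.symm
      rw [List.sum_cons, sum_replicate_pair, show k - 1 + 1 = k by omega, hrk,
        ← add_assoc, hBcov]
      have := range_add_range (a := m) (b := k - 2)
      rw [show m + (k - 2) + 1 = n + 1 by omega, show k - 2 + 1 = k - 1 by omega] at this
      exact this
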